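/- For $d \ge 1$, let $\Theta > 0$, define $\Lambda = 2(4e\Theta)^d$ and $b = (2e\Theta + 1/2)^{-d/(d+1)}$. For positive integers $N, m$ with $(e\Theta(N+1)^2/N)^d \le m < (1 + e\Theta(N+1)^2/N)^d$ and $n = Nm > \Lambda$, setting $\xi = \Theta N m^{-1/d}$, one has $\xi^N \le e^{-b\, n^{1/(d+1)}}$. -/

import Mathlib

lemma pow_aux_stmt11 (x : ℝ) (hx : 1 ≤ x) (d : ℕ) (hd : 1 ≤ d) :
    x * (x + 1) ^ (2 * d) ≤ (x + 1) ^ (d + 1) * (2 * x) ^ d := by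
  obtain ⟨e, rfl⟩ : ∃ e, d = e + 1 := ⟨d - 1, by omega⟩
  have h0 : (0:ℝ) ≤ x + 1 := by linarith
  have h1 : (x + 1) ^ e ≤ (2 * x) ^ e := pow_le_pow_left₀ h0 (by linarith) e
  have h2 : (0:ℝ) < (x + 1) ^ (e + 2) := by positivity
  have h3 : (x + 1) ^ e * x ≤ (2 * x) ^ e * (2 * x) :=
    mul_le_mul h1 (by linarith) (by linarith) (by positivity)
  calc x * (x + 1) ^ (2 * (e + 1)) = (x + 1) ^ (e + 2) * ((x + 1) ^ e * x) := by ring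
    _ ≤ (x + 1) ^ (e + 2) * ((2 * x) ^ e * (2 * x)) :=
        mul_le_mul_of_nonneg_left h3 h2.le
    _ = (x + 1) ^ ((e + 1) + 1) * (2 * x) ^ (e + 1) := by ring

set_option maxHeartbeats 1000000 in
theorem stmt_11 (d : ℕ) (hd : 1 ≤ d) (Θ : ℝ) (hΘ : 0 < Θ)
    (Λ b : ℝ)
    (hΛ : Λ = 2 * (4 * Real.exp 1 * Θ) ^ d)
    (hb : b = (2 * Real.exp 1 * Θ + 1 / 2) ^ (-(d : ℝ) / ((d : ℝ) + 1)))
    (N m n : ℕ) (hN : 0 < N) (hm : 0 < m) (hn : n = N * m)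
    (hml : (Real.exp 1 * Θ * ((N : ℝ) + 1) ^ 2 / N) ^ d ≤ (m : ℝ))
    (hmu : (m : ℝ) < (1 + Real.exp 1 * Θ * ((N : ℝ) + 1) ^ 2 / N) ^ d)
    (hnΛ : Λ < (n : ℝ))
    (ξ : ℝ) (hξ : ξ = Θ * N * (m : ℝ) ^ (-(1 : ℝ) / d)) :
    ξ ^ N ≤ Real.exp (-b * (n : ℝ) ^ ((1 : ℝ) / ((d : ℝ) + 1))) := by
  have hE1 : (0:ℝ) < Real.exp 1 := Real.exp_pos 1
  set E := Real.exp 1 with hEdef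
  have hNr : (1:ℝ) ≤ (N:ℝ) := by exact_mod_cast hN
  have hNp : (0:ℝ) < (N:ℝ) := by linarith
  have hmr : (0:ℝ) < (m:ℝ) := by exact_mod_cast hm
  have hdr : (0:ℝ) < (d:ℝ) := by exact_mod_cast hd
  have hd1 : (0:ℝ) < (d:ℝ) + 1 := by linarith
  set A : ℝ := E * Θ * ((N : ℝ) + 1) ^ 2 / N with hAdef
  have hApos : 0 < A := by
    rw [hAdef]; exact div_pos (by positivity) hNp
  -- Step 1: ξ ≤ N^2 / (E (N+1)^2)
  have hAm : A ≤ (m:ℝ) ^ ((1:ℝ)/d) := by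
    have h1 : ((A ^ d : ℝ)) ^ ((1:ℝ)/d) ≤ (m:ℝ) ^ ((1:ℝ)/d) :=
      Real.rpow_le_rpow (by positivity) hml (by positivity)
    have h2 : ((A ^ d : ℝ)) ^ ((1:ℝ)/d) = A := by
      rw [← Real.rpow_natCast A d, ← Real.rpow_mul hApos.le, mul_one_div,
        div_self hdr.ne', Real.rpow_one]
    rwa [h2] at h1
  have hinv : (m:ℝ) ^ (-(1:ℝ)/d) ≤ A⁻¹ := by
    rw [neg_div, Real.rpow_neg hmr.le]
    exact inv_anti₀ hApos hAm
  have hξr : ξ ≤ (N:ℝ)^2 / (E * ((N:ℝ)+1)^2) := by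
    rw [hξ]
    calc Θ * N * (m:ℝ) ^ (-(1:ℝ)/d) ≤ Θ * N * A⁻¹ :=
          mul_le_mul_of_nonneg_left hinv (by positivity)
      _ = (N:ℝ)^2 / (E * ((N:ℝ)+1)^2) := by
          rw [hAdef]; field_simp
  have hξ0 : 0 ≤ ξ := by rw [hξ]; positivity
  -- Step 2: ξ^N ≤ exp (-(N+1))
  have h6 : (2*(N:ℝ) - 1) * Real.exp (1/(2*(N:ℝ))) ≤ 2*(N:ℝ) := by
    have h3 := Real.add_one_le_exp (-(1/(2*(N:ℝ))))
    have hprod : Real.exp (-(1/(2*(N:ℝ)))) * Real.exp (1/(2*(N:ℝ))) = 1 := by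
      rw [← Real.exp_add]; simp
    have h7 : (-(1/(2*(N:ℝ))) + 1) * Real.exp (1/(2*(N:ℝ))) ≤ 1 := by
      calc (-(1/(2*(N:ℝ))) + 1) * Real.exp (1/(2*(N:ℝ)))
          ≤ Real.exp (-(1/(2*(N:ℝ)))) * Real.exp (1/(2*(N:ℝ))) :=
            mul_le_mul_of_nonneg_right h3 (Real.exp_pos _).le
        _ = 1 := hprod
    have hEq : (2*(N:ℝ) - 1) * Real.exp (1/(2*(N:ℝ)))
        = (2*(N:ℝ)) * ((-(1/(2*(N:ℝ))) + 1) * Real.exp (1/(2*(N:ℝ)))) := by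
      field_simp; ring
    rw [hEq]
    calc (2*(N:ℝ)) * ((-(1/(2*(N:ℝ))) + 1) * Real.exp (1/(2*(N:ℝ))))
        ≤ (2*(N:ℝ)) * 1 := mul_le_mul_of_nonneg_left h7 (by linarith)
      _ = 2*(N:ℝ) := mul_one _
  have h5 : Real.exp (1/(2*(N:ℝ))) * (N:ℝ) ≤ (N:ℝ) + 1 := by
    nlinarith [Real.exp_pos (1/(2*(N:ℝ))), mul_le_mul_of_nonneg_left h6 hNp.le]
  have hE' : Real.exp (1/(2*(N:ℝ))) ^ (2*N) = E := by
    rw [← Real.exp_nat_mul]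
    congr 1
    push_cast
    field_simp
  have key : E * (N:ℝ)^(2*N) ≤ ((N:ℝ)+1)^(2*N) := by
    calc E * (N:ℝ)^(2*N) = (Real.exp (1/(2*(N:ℝ))) * (N:ℝ))^(2*N) := by
          rw [mul_pow, hE']
      _ ≤ ((N:ℝ)+1)^(2*N) := pow_le_pow_left₀ (by positivity) h5 _
  have hexp : Real.exp ((N:ℝ)+1) = E^N * E := by
    rw [hEdef, ← Real.exp_nat_mul, mul_one, ← Real.exp_add]
  have h3' : ((N:ℝ)^2 / (E * ((N:ℝ)+1)^2))^N ≤ Real.exp (-((N:ℝ)+1)) := by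
    have hpos : (0:ℝ) < E^N * (((N:ℝ)+1)^2)^N := by positivity
    rw [div_pow, mul_pow, Real.exp_neg, inv_eq_one_div,
      div_le_div_iff₀ hpos (Real.exp_pos _), hexp, ← pow_mul, ← pow_mul]
    nlinarith [mul_le_mul_of_nonneg_left key (pow_nonneg hE1.le N)]
  have hstep2 : ξ ^ N ≤ Real.exp (-((N:ℝ)+1)) :=
    le_trans (pow_le_pow_left₀ hξ0 hξr N) h3'
  -- Step 3: b * n^{1/(d+1)} ≤ N+1
  have hC : (0:ℝ) < 2*E*Θ + 1/2 := by positivity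
  have S : (n:ℝ) ≤ ((N:ℝ)+1)^(d+1) * (2*E*Θ + 1/2)^d := by
    have hnr : (n:ℝ) = (N:ℝ) * (m:ℝ) := by rw [hn]; push_cast; ring
    have hA1 : (0:ℝ) ≤ 1 + A := by linarith [hApos]
    have hmu' : (n:ℝ) ≤ (N:ℝ) * (1 + A)^d := by
      rw [hnr]
      exact mul_le_mul_of_nonneg_left hmu.le hNp.le
    have hstep : 1 + A ≤ ((N:ℝ)+1)^2 * (2*E*Θ + 1/2) / (2*(N:ℝ)) := by
      rw [le_div_iff₀ (by linarith : (0:ℝ) < 2*(N:ℝ))]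
      have hA2 : (1 + A) * (2*(N:ℝ)) = 2*(N:ℝ) + 2*E*Θ*((N:ℝ)+1)^2 := by
        rw [hAdef]; field_simp
      rw [hA2]
      nlinarith [sq_nonneg ((N:ℝ) - 1)]
    have h2N : (0:ℝ) < (2*(N:ℝ))^d := pow_pos (by linarith) d
    calc (n:ℝ) ≤ (N:ℝ) * (1 + A)^d := hmu'
      _ ≤ (N:ℝ) * (((N:ℝ)+1)^2 * (2*E*Θ + 1/2) / (2*(N:ℝ)))^d :=
          mul_le_mul_of_nonneg_left (pow_le_pow_left₀ hA1 hstep d) hNp.le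
      _ = (N:ℝ) * ((N:ℝ)+1)^(2*d) * (2*E*Θ + 1/2)^d / (2*(N:ℝ))^d := by
          rw [div_pow, mul_pow, ← pow_mul]; ring
      _ = ((N:ℝ) * ((N:ℝ)+1)^(2*d)) * ((2*E*Θ + 1/2)^d / (2*(N:ℝ))^d) := by ring
      _ ≤ (((N:ℝ)+1)^(d+1) * (2*(N:ℝ))^d) * ((2*E*Θ + 1/2)^d / (2*(N:ℝ))^d) :=
          mul_le_mul_of_nonneg_right (pow_aux_stmt11 (N:ℝ) hNr d hd) (by positivity)
      _ = ((N:ℝ)+1)^(d+1) * (2*E*Θ + 1/2)^d := by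
          field_simp [hNp.ne']
  have hXeq : (((N:ℝ)+1) * (2*E*Θ + 1/2) ^ ((d:ℝ)/((d:ℝ)+1))) ^ ((d:ℝ)+1)
      = ((N:ℝ)+1)^(d+1) * (2*E*Θ + 1/2)^d := by
    rw [Real.mul_rpow (by positivity) (by positivity),
      ← Real.rpow_natCast ((N:ℝ)+1) (d+1),
      ← Real.rpow_mul hC.le, div_mul_cancel₀ _ hd1.ne', Real.rpow_natCast]
    push_cast
    ring_nf
  have hT : (n:ℝ) ^ ((1:ℝ)/((d:ℝ)+1))
      ≤ ((N:ℝ)+1) * (2*E*Θ + 1/2) ^ ((d:ℝ)/((d:ℝ)+1)) := by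
    have hX0 : (0:ℝ) ≤ ((N:ℝ)+1) * (2*E*Θ + 1/2) ^ ((d:ℝ)/((d:ℝ)+1)) := by positivity
    have h1 : (n:ℝ) ^ ((1:ℝ)/((d:ℝ)+1))
        ≤ ((((N:ℝ)+1) * (2*E*Θ + 1/2) ^ ((d:ℝ)/((d:ℝ)+1))) ^ ((d:ℝ)+1)) ^ ((1:ℝ)/((d:ℝ)+1)) := by
      apply Real.rpow_le_rpow (by positivity) _ (by positivity)
      rw [hXeq]; exact S
    rwa [← Real.rpow_mul hX0, mul_one_div, div_self hd1.ne', Real.rpow_one] at h1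
  have hb0 : 0 ≤ b := by rw [hb]; positivity
  have hfin : b * (n:ℝ) ^ ((1:ℝ)/((d:ℝ)+1)) ≤ (N:ℝ) + 1 := by
    calc b * (n:ℝ) ^ ((1:ℝ)/((d:ℝ)+1))
        ≤ b * (((N:ℝ)+1) * (2*E*Θ + 1/2) ^ ((d:ℝ)/((d:ℝ)+1))) :=
          mul_le_mul_of_nonneg_left hT hb0
      _ = ((N:ℝ)+1) * ((2*E*Θ + 1/2) ^ (-(d:ℝ)/((d:ℝ)+1))
            * (2*E*Θ + 1/2) ^ ((d:ℝ)/((d:ℝ)+1))) := by rw [hb]; ring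
      _ = (N:ℝ) + 1 := by
          rw [← Real.rpow_add hC, ← add_div, neg_add_cancel, zero_div,
            Real.rpow_zero, mul_one]
  calc ξ ^ N ≤ Real.exp (-((N:ℝ)+1)) := hstep2
    _ ≤ Real.exp (-b * (n:ℝ) ^ ((1:ℝ)/((d:ℝ)+1))) := by
        apply Real.exp_le_exp.mpr
        nlinarith [hfin]
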